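/- For every induced subdigraph H of a digraph D, dac(H) ≤ dac(D). -/

import Mathlib

/-- The subset `S` of vertices induces an acyclic subdigraph of the digraph with
arc relation `A` (i.e. there is no directed cycle all of whose vertices lie in `S`). -/
def AcyclicSet {V : Type*} (A : V → V → Prop) (S : Set V) : Prop :=
  ∀ v : V, ¬ Relation.TransGen (fun x y => x ∈ S ∧ y ∈ S ∧ A x y) v v

/-- `c` is an acyclic vertex coloring of the digraph `A` with `k` colors:
`c` is surjective and every chromatic class induces an acyclic subdigraph. -/
def IsAcyclicColoring {V : Type*} (A : V → V → Prop) {k : ℕ} (c : V → Fin k) : Prop :=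
  Function.Surjective c ∧ ∀ i : Fin k, AcyclicSet A {v | c v = i}

/-- `c` is a complete vertex coloring of the digraph `A` with `k` colors:
`c` is surjective and for every ordered pair of distinct colors `(i, j)` there is
an arc `(u, v)` with `c u = i` and `c v = j`. -/
def IsCompleteColoring {V : Type*} (A : V → V → Prop) {k : ℕ} (c : V → Fin k) : Prop :=
  Function.Surjective c ∧
    ∀ i j : Fin k, i ≠ j → ∃ u v : V, A u v ∧ c u = i ∧ c v = j

/-- The diachromatic number: the largest `k` admitting a complete acyclic `k`-coloring. -/
noncomputable def dac {V : Type*} (A : V → V → Prop) : ℕ :=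
  sSup {k | ∃ c : V → Fin k, IsAcyclicColoring A c ∧ IsCompleteColoring A c}

/-- The dichromatic number: the smallest `k` admitting an acyclic `k`-coloring. -/
noncomputable def dc {V : Type*} (A : V → V → Prop) : ℕ :=
  sInf {k | ∃ c : V → Fin k, IsAcyclicColoring A c}

/-- The pseudoachromatic number: the largest `k` admitting a complete `k`-coloring. -/
noncomputable def psi {V : Type*} (A : V → V → Prop) : ℕ :=
  sSup {k | ∃ c : V → Fin k, IsCompleteColoring A c}

/-- `A` is a tournament: no loops, and for distinct vertices exactly one of the
two possible arcs is present. -/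
def IsTournament {V : Type*} (A : V → V → Prop) : Prop :=
  (∀ v : V, ¬ A v v) ∧ ∀ u v : V, u ≠ v → (A u v ↔ ¬ A v u)

open Relation

section Aux

variable {V : Type*}

private lemma transGen_subtype {R : V → V → Prop} {S : Set V}
    (h : ∀ x y, R x y → x ∈ S ∧ y ∈ S) :
    ∀ {a b : V}, TransGen R a b → ∀ (ha : a ∈ S) (hb : b ∈ S),
      TransGen (fun x y : S => R x.1 y.1) ⟨a, ha⟩ ⟨b, hb⟩ := by
  intro a b hab
  induction hab with
  | single h1 => intro ha hb; exact TransGen.single h1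
  | tail hab h1 ih =>
    intro ha hc
    exact TransGen.tail (ih ha (h _ _ h1).1) h1

private lemma loop_analysis {R Q : V → V → Prop} {u : V}
    (hQ : ∀ x y, R x y → x ≠ u → y ≠ u → Q x y) :
    ∀ {a b : V}, TransGen R a b → a ≠ u → b ≠ u →
      TransGen Q a b ∨ ((∃ w, R u w) ∧ (∃ z, R z u)) := by
  intro a b hab
  induction hab with
  | single h1 => intro ha hb; exact Or.inl (TransGen.single (hQ _ _ h1 ha hb))
  | @tail b c hab h1 ih =>
    intro ha hc
    by_cases hb : b = u
    · subst hb
      obtain ⟨z, _, hz⟩ := TransGen.tail'_iff.mp hab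
      exact Or.inr ⟨⟨c, h1⟩, ⟨z, hz⟩⟩
    · rcases ih ha hb with h | h
      · exact Or.inl (h.tail (hQ _ _ h1 hb hc))
      · exact Or.inr h

private lemma acyclicSet_congr {A : V → V → Prop} {C C' : Set V} (h : C = C')
    (hC : AcyclicSet A C) : AcyclicSet A C' := h ▸ hC

/-- An acyclic, complete partial coloring: all witnesses lie in `T`. -/
private def GoodOn (A : V → V → Prop) (T : Set V) (m : ℕ) : Prop :=
  ∃ c : V → Fin m,
    (∀ i, ∃ v ∈ T, c v = i) ∧
    (∀ i, AcyclicSet A ({v | c v = i} ∩ T)) ∧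
    (∀ i j : Fin m, i ≠ j → ∃ x ∈ T, ∃ y ∈ T, A x y ∧ c x = i ∧ c y = j)

private lemma step (A : V → V → Prop) (hirr : ∀ v, ¬ A v v) {T : Set V} {m : ℕ}
    (u : V) (hu : u ∉ T) (h : GoodOn A T m) :
    GoodOn A (insert u T) m ∨ GoodOn A (insert u T) (m + 1) := by
  classical
  obtain ⟨c, hsurj, hacyc, hcomp⟩ := h
  by_cases hex : ∃ i : Fin m, AcyclicSet A (insert u ({v | c v = i} ∩ T))
  · obtain ⟨i₀, hi₀⟩ := hex
    left
    refine ⟨fun v => if v = u then i₀ else c v, ?_, ?_, ?_⟩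
    · intro i
      obtain ⟨v, hvT, hvc⟩ := hsurj i
      have hvu : v ≠ u := fun h => hu (h ▸ hvT)
      exact ⟨v, Or.inr hvT, by simp [hvu, hvc]⟩
    · intro j
      by_cases hj : j = i₀
      · subst hj
        refine acyclicSet_congr ?_ hi₀
        ext v
        by_cases hv : v = u <;> simp [hv, and_comm]
      · refine acyclicSet_congr ?_ (hacyc j)
        ext v
        by_cases hv : v = u
        · subst hv
          simp [hu, Ne.symm hj]
        · simp only [Set.mem_inter_iff, Set.mem_setOf_eq, if_neg hv, Set.mem_insert_iff]
          tauto
    · intro i j hij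
      obtain ⟨x, hxT, y, hyT, hA, hx, hy⟩ := hcomp i j hij
      have hxu : x ≠ u := fun h => hu (h ▸ hxT)
      have hyu : y ≠ u := fun h => hu (h ▸ hyT)
      exact ⟨x, Or.inr hxT, y, Or.inr hyT, hA, by simp [hxu, hx], by simp [hyu, hy]⟩
  · right
    push_neg at hex
    -- for every color there are arcs in both directions between `u` and that class
    have key : ∀ i : Fin m,
        (∃ w, w ∈ T ∧ c w = i ∧ A u w) ∧ (∃ z, z ∈ T ∧ c z = i ∧ A z u) := by
      intro i
      have hne := hex i
      unfold AcyclicSet at hne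
      push_neg at hne
      obtain ⟨v, hv⟩ := hne
      set C : Set V := insert u ({x | c x = i} ∩ T) with hC
      have extract : ((∃ w, w ∈ C ∧ A u w) ∧ (∃ z, z ∈ C ∧ A z u)) →
          (∃ w, w ∈ T ∧ c w = i ∧ A u w) ∧ (∃ z, z ∈ T ∧ c z = i ∧ A z u) := by
        rintro ⟨⟨w, hwC, hwA⟩, ⟨z, hzC, hzA⟩⟩
        have hwu : w ≠ u := fun h => hirr u (h ▸ hwA)
        have hzu : z ≠ u := fun h => hirr u (h ▸ hzA)
        have hwC' : w ∈ ({x | c x = i} ∩ T : Set V) := by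
          rcases hwC with h | h
          · exact absurd h hwu
          · exact h
        have hzC' : z ∈ ({x | c x = i} ∩ T : Set V) := by
          rcases hzC with h | h
          · exact absurd h hzu
          · exact h
        exact ⟨⟨w, hwC'.2, hwC'.1, hwA⟩, ⟨z, hzC'.2, hzC'.1, hzA⟩⟩
      by_cases hvu : v = u
      · subst hvu
        obtain ⟨w, hw, -⟩ := TransGen.head'_iff.mp hv
        obtain ⟨z, -, hz⟩ := TransGen.tail'_iff.mp hv
        exact extract ⟨⟨w, hw.2.1, hw.2.2⟩, ⟨z, hz.1, hz.2.2⟩⟩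
      · have hQ : ∀ x y, (x ∈ C ∧ y ∈ C ∧ A x y) → x ≠ u → y ≠ u →
            (x ∈ ({x | c x = i} ∩ T : Set V) ∧ y ∈ ({x | c x = i} ∩ T : Set V) ∧ A x y) := by
          rintro x y ⟨hx, hy, hA⟩ hxu hyu
          refine ⟨?_, ?_, hA⟩
          · rcases hx with h | h
            · exact absurd h hxu
            · exact h
          · rcases hy with h | h
            · exact absurd h hyu
            · exact h
        rcases loop_analysis hQ hv hvu hvu with hloop | harcs
        · exact absurd hloop (hacyc i v)
        · obtain ⟨⟨w, hw⟩, ⟨z, hz⟩⟩ := harcs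
          exact extract ⟨⟨w, hw.2.1, hw.2.2⟩, ⟨z, hz.1, hz.2.2⟩⟩
    choose w hwT hwc hwA using fun i => (key i).1
    choose z hzT hzc hzA using fun i => (key i).2
    refine ⟨fun v => if v = u then Fin.last m else (c v).castSucc, ?_, ?_, ?_⟩
    · intro j
      induction j using Fin.lastCases with
      | last => exact ⟨u, Or.inl rfl, by simp⟩
      | cast i =>
        obtain ⟨v, hvT, hvc⟩ := hsurj i
        have hvu : v ≠ u := fun h => hu (h ▸ hvT)
        exact ⟨v, Or.inr hvT, by simp [hvu, hvc]⟩
    · intro j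
      induction j using Fin.lastCases with
      | last =>
        intro v htg
        obtain ⟨y, hy, -⟩ := TransGen.head'_iff.mp htg
        obtain ⟨hv, hy', hA⟩ := hy
        have hmem : ∀ x, x ∈ ({x | (if x = u then Fin.last m else (c x).castSucc) = Fin.last m}
            ∩ insert u T : Set V) → x = u := by
          intro x hx
          by_contra hxu
          have := hx.1
          simp only [Set.mem_setOf_eq, if_neg hxu] at this
          exact absurd this (Fin.castSucc_lt_last (c x)).ne
        have h1 := hmem _ hv
        have h2 := hmem _ hy'
        subst h1
        rw [h2] at hA
        exact hirr v hA
      | cast i =>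
        refine acyclicSet_congr ?_ (hacyc i)
        ext x
        by_cases hx : x = u
        · subst hx
          simp [hu, (Fin.castSucc_lt_last i).ne']
        · simp only [Set.mem_inter_iff, Set.mem_setOf_eq, if_neg hx, Fin.castSucc_inj,
            Set.mem_insert_iff]
          tauto
    · intro p q hpq
      induction p using Fin.lastCases with
      | last =>
        induction q using Fin.lastCases with
        | last => exact absurd rfl hpq
        | cast j =>
          have hwu : w j ≠ u := fun h => hirr u (h ▸ hwA j)
          exact ⟨u, Or.inl rfl, w j, Or.inr (hwT j), hwA j, by simp, by simp [hwu, hwc j]⟩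
      | cast i =>
        induction q using Fin.lastCases with
        | last =>
          have hzu : z i ≠ u := fun h => hirr u (h ▸ hzA i)
          exact ⟨z i, Or.inr (hzT i), u, Or.inl rfl, hzA i, by simp [hzu, hzc i], by simp⟩
        | cast j =>
          have hij : i ≠ j := fun h => hpq (by rw [h])
          obtain ⟨x, hxT, y, hyT, hA, hx, hy⟩ := hcomp i j hij
          have hxu : x ≠ u := fun h => hu (h ▸ hxT)
          have hyu : y ≠ u := fun h => hu (h ▸ hyT)
          exact ⟨x, Or.inr hxT, y, Or.inr hyT, hA, by simp [hxu, hx], by simp [hyu, hy]⟩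

private lemma extend (A : V → V → Prop) (hirr : ∀ v, ¬ A v v) (F : Finset V) :
    ∀ (T : Set V) (m : ℕ), GoodOn A T m → (∀ v, v ∉ T → v ∈ F) →
      ∃ m', m ≤ m' ∧ GoodOn A Set.univ m' := by
  classical
  induction F using Finset.induction with
  | empty =>
    intro T m h hT
    have hT' : T = Set.univ := by
      ext v
      simp only [Set.mem_univ, iff_true]
      by_contra hv
      exact absurd (hT v hv) (Finset.notMem_empty v)
    exact ⟨m, le_rfl, hT' ▸ h⟩
  | @insert a F haF ih =>
    intro T m h hT
    by_cases haT : a ∈ T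
    · refine ih T m h ?_
      intro v hv
      have := hT v hv
      rcases Finset.mem_insert.mp this with h' | h'
      · exact absurd (h' ▸ haT) hv
      · exact h'
    · have hcond : ∀ v, v ∉ insert a T → v ∈ F := by
        intro v hv
        simp only [Set.mem_insert_iff, not_or] at hv
        rcases Finset.mem_insert.mp (hT v hv.2) with h' | h'
        · exact absurd h' hv.1
        · exact h'
      rcases step A hirr a haT h with h' | h'
      · exact ih (insert a T) m h' hcond
      · obtain ⟨m', hm', hg⟩ := ih (insert a T) (m + 1) h' hcond
        exact ⟨m', le_trans (Nat.le_succ m) hm', hg⟩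

end Aux

/-- For every induced subdigraph `H` of a digraph `D`, `dac(H) ≤ dac(D)`. -/
theorem stmt5 {V : Type*} [Fintype V] (A : V → V → Prop)
    (hirr : ∀ v : V, ¬ A v v) (S : Set V) :
    dac (fun x y : S => A x.1 y.1) ≤ dac A := by
  classical
  unfold dac
  have hbdd : BddAbove {k | ∃ c : V → Fin k, IsAcyclicColoring A c ∧ IsCompleteColoring A c} := by
    refine ⟨Fintype.card V, ?_⟩
    rintro k ⟨c, ⟨hsurj, -⟩, -⟩
    simpa using Fintype.card_le_of_surjective c hsurj
  apply csSup_le'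
  rintro k ⟨c₀, ⟨hsurj₀, hacyc₀⟩, ⟨-, hcomp₀⟩⟩
  rcases Nat.eq_zero_or_pos k with hk0 | hkpos
  · subst hk0; exact Nat.zero_le _
  · haveI : Nonempty (Fin k) := ⟨⟨0, hkpos⟩⟩
    have hgood : GoodOn A S k := by
      refine ⟨fun v => if h : v ∈ S then c₀ ⟨v, h⟩ else Classical.arbitrary _, ?_, ?_, ?_⟩
      · intro i
        obtain ⟨s, hs⟩ := hsurj₀ i
        exact ⟨s.1, s.2, by simp only [dif_pos s.2]; exact hs⟩
      · intro i v htg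
        set c : V → Fin k := fun v => if h : v ∈ S then c₀ ⟨v, h⟩ else Classical.arbitrary _
          with hc
        have hmem : ∀ x y, (x ∈ ({v | c v = i} ∩ S : Set V) ∧ y ∈ ({v | c v = i} ∩ S : Set V)
            ∧ A x y) → x ∈ S ∧ y ∈ S := fun x y h => ⟨h.1.2, h.2.1.2⟩
        obtain ⟨y, hy, -⟩ := TransGen.head'_iff.mp htg
        have hvS : v ∈ S := hy.1.2
        have h2 := transGen_subtype hmem htg hvS hvS
        refine hacyc₀ i ⟨v, hvS⟩ (TransGen.mono ?_ _ _ h2)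
        · rintro x y ⟨hx, hy', hA⟩
          refine ⟨?_, ?_, hA⟩
          · have := hx.1
            simpa only [Set.mem_setOf_eq, hc, dif_pos x.2] using this
          · have := hy'.1
            simpa only [Set.mem_setOf_eq, hc, dif_pos y.2] using this
      · intro i j hij
        obtain ⟨x, y, hA, hx, hy⟩ := hcomp₀ i j hij
        exact ⟨x.1, x.2, y.1, y.2, hA, by simp only [dif_pos x.2]; exact hx,
          by simp only [dif_pos y.2]; exact hy⟩
    obtain ⟨m, hkm, c, h1, h2, h3⟩ := extend A hirr Finset.univ S k hgood
      (fun v _ => Finset.mem_univ v)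
    have hmem : m ∈ {k | ∃ c : V → Fin k, IsAcyclicColoring A c ∧ IsCompleteColoring A c} := by
      refine ⟨c, ⟨?_, ?_⟩, ⟨?_, ?_⟩⟩
      · intro i; obtain ⟨v, -, hv⟩ := h1 i; exact ⟨v, hv⟩
      · intro i
        have := h2 i
        rwa [Set.inter_univ] at this
      · intro i; obtain ⟨v, -, hv⟩ := h1 i; exact ⟨v, hv⟩
      · intro i j hij
        obtain ⟨x, -, y, -, hA, hx, hy⟩ := h3 i j hij
        exact ⟨x, y, hA, hx, hy⟩
    exact le_trans hkm (le_csSup hbdd hmem)
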